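/- (KL divergence between two spiked Gaussian class-conditional models.) For $i\in\{1,2\}$ let $B^{(i)} \in \mathbb{R}^{p\times K}$ have orthonormal columns, $\lambda>0$, $\alpha\in\mathbb{R}^K$, and set $\mu^{(i)} = \sqrt\lambda B^{(i)}\alpha$ and $\Sigma^{(i)} = \lambda B^{(i)}(B^{(i)})^\top + I_p$. Then: (a) $|\Sigma^{(i)}| = (\lambda+1)^K$ and $(\Sigma^{(i)})^{-1} = I_p - \frac{\lambda}{\lambda+1}B^{(i)}(B^{(i)})^\top$; (b) $(\Sigma^{(i)})^{-1}\mu^{(i)} = \frac{\sqrt\lambda}{1+\lambda}B^{(i)}\alpha$ and $(\mu^{(i)})^\top(\Sigma^{(i)})^{-1}\mu^{(i)} = \frac{\lambda}{1+\lambda}\|\alpha\|_2^2$; (c) $\mathrm{KL}\big(N_p(\mu^{(1)},\Sigma^{(1)}),\,N_p(\mu^{(2)},\Sigma^{(2)})\big) \le \frac{\lambda^2}{2(1+\lambda)}\|B^{(1)}(B^{(1)})^\top - B^{(2)}(B^{(2)})^\top\|_F^2 + \frac{\lambda}{2}\|\alpha\|_2^2\,\|\tilde b\|_2^2$ where $\tilde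 b$ denotes the difference of the relevant first columns, in particular if $B^{(1)},B^{(2)}$ differ only in the first column $B_1^{(i)} = (\sqrt{1-\varepsilon^2}, 0_{K-1}^\top, \varepsilon (J^{(i)})^\top)^\top$ with unit vectors $J^{(i)}$ and $\alpha = (\Delta/2, 0_{K-1}^\top)^\top$, then $\mathrm{KL} \le \big(\frac{2\lambda}{1+\lambda} + \frac{\Delta^2}{2}\big)\lambda\varepsilon^2$. -/
import Mathlib


open Matrix

/-- Closed-form Kullback–Leibler divergence between the multivariate Gaussians
`N(μ1, Σ1)` and `N(μ2, Σ2)`. -/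
noncomputable def klGaussian {p : ℕ} (μ1 : Fin p → ℝ) (S1 : Matrix (Fin p) (Fin p) ℝ)
    (μ2 : Fin p → ℝ) (S2 : Matrix (Fin p) (Fin p) ℝ) : ℝ :=
  (1 / 2) * (Matrix.trace (S2⁻¹ * (S1 - S2)) + Real.log (S2.det / S1.det)
    + (μ2 - μ1) ⬝ᵥ S2⁻¹.mulVec (μ2 - μ1))

lemma spike_aux {p K : ℕ} (lam : ℝ) (hlam : 0 < lam) (B : Matrix (Fin p) (Fin K) ℝ)
    (hB : Bᵀ * B = 1) (α : Fin K → ℝ) (mu : Fin p → ℝ) (S : Matrix (Fin p) (Fin p) ℝ)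
    (hmu : mu = Real.sqrt lam • B.mulVec α) (hS : S = lam • (B * Bᵀ) + 1) :
    S.det = (lam + 1) ^ K ∧ S⁻¹ = 1 - (lam / (lam + 1)) • (B * Bᵀ)
      ∧ S⁻¹.mulVec mu = (Real.sqrt lam / (1 + lam)) • B.mulVec α
      ∧ mu ⬝ᵥ S⁻¹.mulVec mu = lam / (1 + lam) * (α ⬝ᵥ α) := by
  have hl1 : lam + 1 ≠ 0 := by positivity
  have h1l : (1 : ℝ) + lam ≠ 0 := by positivity
  set c : ℝ := lam / (lam + 1) with hc
  have hPP : (B * Bᵀ) * (B * Bᵀ) = B * Bᵀ := by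
    rw [← Matrix.mul_assoc, Matrix.mul_assoc B, hB, Matrix.mul_one]
  have hcoef : lam - (c * lam + c) = 0 := by rw [hc]; field_simp; ring
  have hright : S * (1 - c • (B * Bᵀ)) = 1 := by
    rw [hS]
    simp only [mul_sub, add_mul, one_mul, mul_one, Matrix.smul_mul, Matrix.mul_smul, hPP,
      smul_smul]
    have h2 : lam • (B * Bᵀ) + 1 - ((c * lam) • (B * Bᵀ) + c • (B * Bᵀ))
        = (lam - (c * lam + c)) • (B * Bᵀ) + 1 := by
      rw [sub_smul, add_smul]; abel
    rw [h2, hcoef, zero_smul, zero_add]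
  have hinv : S⁻¹ = 1 - c • (B * Bᵀ) := Matrix.inv_eq_right_inv hright
  have hdet : S.det = (lam + 1) ^ K := by
    rw [hS]
    have h1 : lam • (B * Bᵀ) + (1 : Matrix (Fin p) (Fin p) ℝ) = 1 + (lam • B) * Bᵀ := by
      rw [Matrix.smul_mul, add_comm]
    rw [h1, Matrix.det_one_add_mul_comm, Matrix.mul_smul, hB]
    have h2 : (1 : Matrix (Fin K) (Fin K) ℝ) + lam • (1 : Matrix (Fin K) (Fin K) ℝ)
        = (lam + 1 : ℝ) • (1 : Matrix (Fin K) (Fin K) ℝ) := by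
      rw [add_smul, one_smul]; abel
    rw [h2, Matrix.det_smul, Matrix.det_one, mul_one, Fintype.card_fin]
  have hPB : (B * Bᵀ) * B = B := by
    rw [Matrix.mul_assoc, hB, Matrix.mul_one]
  have hss : Real.sqrt lam * Real.sqrt lam = lam := Real.mul_self_sqrt hlam.le
  have hscal : Real.sqrt lam - c * Real.sqrt lam = Real.sqrt lam / (1 + lam) := by
    rw [hc]; field_simp; ring
  have hinvmu : S⁻¹.mulVec mu = (Real.sqrt lam / (1 + lam)) • B.mulVec α := by
    rw [hinv, hmu, Matrix.sub_mulVec, Matrix.one_mulVec, Matrix.smul_mulVec,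
      Matrix.mulVec_smul, Matrix.mulVec_mulVec, hPB, smul_smul, ← sub_smul, hscal]
  refine ⟨hdet, hinv, hinvmu, ?_⟩
  rw [hinvmu, hmu]
  have hBB : B.mulVec α ⬝ᵥ B.mulVec α = α ⬝ᵥ α := by
    rw [Matrix.dotProduct_mulVec, ← Matrix.mulVec_transpose, Matrix.mulVec_mulVec, hB,
      Matrix.one_mulVec]
  rw [smul_dotProduct, dotProduct_smul, smul_eq_mul, smul_eq_mul, hBB]
  rw [show Real.sqrt lam * (Real.sqrt lam / (1 + lam) * (α ⬝ᵥ α))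
      = (Real.sqrt lam * Real.sqrt lam) / (1 + lam) * (α ⬝ᵥ α) from by ring, hss]

lemma bound1_arith (lam c Fs D q Δ : ℝ) (hlam : 0 < lam) (hc0 : 0 ≤ c) (hF0 : 0 ≤ Fs)
    (hq0 : 0 ≤ q) (hx : lam ^ 2 / (2 * (1 + lam)) = lam * c / 2) :
    (1 / 2) * (lam * c * (Fs / 2) + lam * (Δ / 2) ^ 2 * (D - c * q))
      ≤ lam ^ 2 / (2 * (1 + lam)) * Fs + lam / 2 * (Δ / 2) ^ 2 * D := by
  rw [hx]
  nlinarith [mul_nonneg (mul_nonneg hlam.le hc0) hF0,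
    mul_nonneg (mul_nonneg (mul_nonneg hlam.le (sq_nonneg Δ)) hc0) hq0]

lemma bound2_arith (lam c Fs D q Δ ε t : ℝ) (hlam : 0 < lam) (hc0 : 0 ≤ c) (hq0 : 0 ≤ q)
    (hF : Fs = 2 - 2 * ((1 - ε ^ 2) + ε ^ 2 * t) ^ 2) (hD : D = ε ^ 2 * (2 - 2 * t))
    (ht2 : t ^ 2 ≤ 1) (hε0 : 0 ≤ ε) (hε1 : ε ≤ 1)
    (htgt : (2 * lam / (1 + lam) + Δ ^ 2 / 2) * lam * ε ^ 2
      = 2 * lam * c * ε ^ 2 + lam * Δ ^ 2 * ε ^ 2 / 2) :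
    (1 / 2) * (lam * c * (Fs / 2) + lam * (Δ / 2) ^ 2 * (D - c * q))
      ≤ (2 * lam / (1 + lam) + Δ ^ 2 / 2) * lam * ε ^ 2 := by
  have ht1 : t ≤ 1 := by nlinarith
  have htm : (-1 : ℝ) ≤ t := by nlinarith
  have hxb : ε ^ 2 * (1 - t) ≤ 2 * ε ^ 2 := by nlinarith [sq_nonneg ε]
  have hx0 : 0 ≤ ε ^ 2 * (1 - t) := mul_nonneg (sq_nonneg ε) (by linarith)
  have hFb : Fs ≤ 8 * ε ^ 2 := by
    rw [hF]; nlinarith [sq_nonneg (ε ^ 2 * (1 - t))]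
  have hDb : D ≤ 4 * ε ^ 2 := by rw [hD]; nlinarith [sq_nonneg ε]
  rw [htgt]
  nlinarith [mul_nonneg (mul_nonneg hlam.le hc0) (sub_nonneg.2 hFb),
    mul_nonneg (mul_nonneg hlam.le (sq_nonneg Δ)) (sub_nonneg.2 hDb),
    mul_nonneg (mul_nonneg (mul_nonneg hlam.le (sq_nonneg Δ)) hc0) hq0]

/-- Spiked Gaussian class-conditional models `μ⁽ⁱ⁾ = √λ B⁽ⁱ⁾ α`,
`Σ⁽ⁱ⁾ = λ B⁽ⁱ⁾(B⁽ⁱ⁾)ᵀ + I`: (a) determinant and inverse formulas; (b) formulas for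
`(Σ⁽ⁱ⁾)⁻¹μ⁽ⁱ⁾` and the induced quadratic form; (c) KL divergence bounds when the two
loading matrices differ only in the first column
`B₁⁽ⁱ⁾ = √(1-ε²) e + ε u⁽ⁱ⁾` and `α = (Δ/2, 0, …, 0)ᵀ`, in particular
`KL ≤ (2λ/(1+λ) + Δ²/2) λ ε²`. -/
theorem stmt19 {p K : ℕ} [NeZero K] (lam : ℝ) (hlam : 0 < lam)
    (B1 B2 : Matrix (Fin p) (Fin K) ℝ)
    (hB1 : B1ᵀ * B1 = 1) (hB2 : B2ᵀ * B2 = 1)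
    (Δ ε : ℝ) (hε0 : 0 ≤ ε) (hε1 : ε ≤ 1)
    (α : Fin K → ℝ) (hα : α = fun j => if j = 0 then Δ / 2 else 0)
    (e u1 u2 : Fin p → ℝ)
    (he : e ⬝ᵥ e = 1) (hu1 : u1 ⬝ᵥ u1 = 1) (hu2 : u2 ⬝ᵥ u2 = 1)
    (heu1 : e ⬝ᵥ u1 = 0) (heu2 : e ⬝ᵥ u2 = 0)
    (hcol1 : ∀ i, B1 i 0 = Real.sqrt (1 - ε ^ 2) * e i + ε * u1 i)
    (hcol2 : ∀ i, B2 i 0 = Real.sqrt (1 - ε ^ 2) * e i + ε * u2 i)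
    (hcols : ∀ j : Fin K, j ≠ 0 → ∀ i, B1 i j = B2 i j)
    (mu1 mu2 : Fin p → ℝ) (S1 S2 : Matrix (Fin p) (Fin p) ℝ)
    (hmu1 : mu1 = Real.sqrt lam • B1.mulVec α)
    (hmu2 : mu2 = Real.sqrt lam • B2.mulVec α)
    (hS1 : S1 = lam • (B1 * B1ᵀ) + 1)
    (hS2 : S2 = lam • (B2 * B2ᵀ) + 1) :
    -- (a) determinant and inverse
    (S1.det = (lam + 1) ^ K ∧ S1⁻¹ = 1 - (lam / (lam + 1)) • (B1 * B1ᵀ))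
    ∧ (S2.det = (lam + 1) ^ K ∧ S2⁻¹ = 1 - (lam / (lam + 1)) • (B2 * B2ᵀ))
    -- (b) mean formulas
    ∧ (S1⁻¹.mulVec mu1 = (Real.sqrt lam / (1 + lam)) • B1.mulVec α
        ∧ mu1 ⬝ᵥ S1⁻¹.mulVec mu1 = lam / (1 + lam) * (α ⬝ᵥ α))
    ∧ (S2⁻¹.mulVec mu2 = (Real.sqrt lam / (1 + lam)) • B2.mulVec α
        ∧ mu2 ⬝ᵥ S2⁻¹.mulVec mu2 = lam / (1 + lam) * (α ⬝ᵥ α))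
    -- (c) KL divergence bounds
    ∧ klGaussian mu1 S1 mu2 S2
        ≤ lam ^ 2 / (2 * (1 + lam)) * (∑ i, ∑ j, ((B1 * B1ᵀ - B2 * B2ᵀ) i j) ^ 2)
          + lam / 2 * (α ⬝ᵥ α) * (∑ i, (B1 i 0 - B2 i 0) ^ 2)
    ∧ klGaussian mu1 S1 mu2 S2 ≤ (2 * lam / (1 + lam) + Δ ^ 2 / 2) * lam * ε ^ 2 := by
  have hε2 : ε ^ 2 ≤ 1 := by rw [sq]; exact mul_le_one₀ hε1 hε0 hε1
  have ha2 : Real.sqrt (1 - ε ^ 2) * Real.sqrt (1 - ε ^ 2) = 1 - ε ^ 2 :=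
    Real.mul_self_sqrt (by linarith)
  obtain ⟨hdet1, hinv1, hm1, hq1⟩ := spike_aux lam hlam B1 hB1 α mu1 S1 hmu1 hS1
  obtain ⟨hdet2, hinv2, hm2, hq2⟩ := spike_aux lam hlam B2 hB2 α mu2 S2 hmu2 hS2
  have hl1 : lam + 1 ≠ 0 := by positivity
  have h1l : (0:ℝ) < 1 + lam := by linarith
  set c : ℝ := lam / (lam + 1) with hc
  have hc0 : 0 ≤ c := by positivity
  set P1 := B1 * B1ᵀ with hP1def
  set P2 := B2 * B2ᵀ with hP2def
  have hPP1 : P1 * P1 = P1 := by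
    rw [hP1def, ← Matrix.mul_assoc, Matrix.mul_assoc B1, hB1, Matrix.mul_one]
  have hPP2 : P2 * P2 = P2 := by
    rw [hP2def, ← Matrix.mul_assoc, Matrix.mul_assoc B2, hB2, Matrix.mul_one]
  have htrP1 : P1.trace = (K : ℝ) := by
    rw [hP1def, Matrix.trace_mul_comm, hB1, Matrix.trace_one, Fintype.card_fin]
  have htrP2 : P2.trace = (K : ℝ) := by
    rw [hP2def, Matrix.trace_mul_comm, hB2, Matrix.trace_one, Fintype.card_fin]
  -- trace of S2⁻¹ (S1 - S2)
  have hdiff : S1 - S2 = lam • (P1 - P2) := by rw [hS1, hS2, smul_sub]; abel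
  set T : ℝ := (P2 * P1).trace with hT
  have hexp : S2⁻¹ * (S1 - S2)
      = lam • P1 - lam • P2 - ((c * lam) • (P2 * P1) - (c * lam) • P2) := by
    rw [hinv2, hdiff]
    simp only [Matrix.sub_mul, Matrix.one_mul, Matrix.smul_mul, Matrix.mul_smul,
      smul_sub, smul_smul, Matrix.mul_sub, hPP2, mul_comm lam c]
    abel
  have hTRval : (S2⁻¹ * (S1 - S2)).trace = lam * c * ((K : ℝ) - T) := by
    rw [hexp]
    simp only [Matrix.trace_sub, Matrix.trace_smul, smul_eq_mul, htrP1, htrP2, ← hT]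
    ring
  -- Frobenius norm identity
  have hsymm : ∀ i j, (P1 - P2) i j = (P1 - P2) j i := by
    intro i j
    simp only [Matrix.sub_apply, Matrix.mul_apply, Matrix.transpose_apply, hP1def, hP2def]
    have h : ∀ (B : Matrix (Fin p) (Fin K) ℝ), ∑ k, B i k * B j k = ∑ k, B j k * B i k :=
      fun B => Finset.sum_congr rfl fun k _ => mul_comm _ _
    rw [h B1, h B2]
  set Fs : ℝ := ∑ i, ∑ j, ((P1 - P2) i j) ^ 2 with hFsdef
  have hFtrace : ((P1 - P2) * (P1 - P2)).trace = Fs := by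
    rw [hFsdef]
    simp only [Matrix.trace, Matrix.diag, Matrix.mul_apply]
    refine Finset.sum_congr rfl fun i _ => Finset.sum_congr rfl fun j _ => ?_
    rw [hsymm j i, sq]
  have hFtrace2 : ((P1 - P2) * (P1 - P2)).trace = 2 * K - 2 * T := by
    have hPP : (P1 - P2) * (P1 - P2) = P1 * P1 - P1 * P2 - (P2 * P1 - P2 * P2) := by
      rw [Matrix.sub_mul, Matrix.mul_sub, Matrix.mul_sub]
    rw [hPP]
    simp only [Matrix.trace_sub, hPP1, hPP2, htrP1, htrP2, ← hT]
    rw [Matrix.trace_mul_comm P1 P2, ← hT]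
    ring
  have hKT : (K : ℝ) - T = Fs / 2 := by
    have := hFtrace.symm.trans hFtrace2
    linarith
  -- log term
  have hLOG : Real.log (S2.det / S1.det) = 0 := by
    rw [hdet1, hdet2, div_self (pow_ne_zero _ hl1), Real.log_one]
  -- quadratic term
  set d : Fin p → ℝ := fun i => B2 i 0 - B1 i 0 with hd
  have hmudiff : mu2 - mu1 = (Real.sqrt lam * (Δ / 2)) • d := by
    rw [hmu1, hmu2]
    funext i
    simp only [Pi.sub_apply, Pi.smul_apply, smul_eq_mul, Matrix.mulVec, dotProduct, hα,
      mul_ite, mul_zero, Finset.sum_ite_eq', Finset.mem_univ, if_true, hd]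
    ring
  set q : ℝ := d ⬝ᵥ P2.mulVec d with hqdef
  have hq0 : 0 ≤ q := by
    have hrw : q = (B2ᵀ.mulVec d) ⬝ᵥ (B2ᵀ.mulVec d) := by
      rw [hqdef, hP2def, ← Matrix.mulVec_mulVec, Matrix.dotProduct_mulVec,
        ← Matrix.mulVec_transpose]
    rw [hrw]
    exact Finset.sum_nonneg fun i _ => mul_self_nonneg _
  set D : ℝ := ∑ i, (B1 i 0 - B2 i 0) ^ 2 with hDdef
  have hdd : d ⬝ᵥ d = D := by
    rw [hDdef]
    exact Finset.sum_congr rfl fun i _ => by rw [hd]; ring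
  have hss : Real.sqrt lam * Real.sqrt lam = lam := Real.mul_self_sqrt hlam.le
  have hQUAD : (mu2 - mu1) ⬝ᵥ S2⁻¹.mulVec (mu2 - mu1) = lam * (Δ / 2) ^ 2 * (D - c * q) := by
    rw [hmudiff, hinv2, smul_dotProduct, Matrix.mulVec_smul, dotProduct_smul,
      Matrix.sub_mulVec, Matrix.one_mulVec, Matrix.smul_mulVec, dotProduct_sub,
      dotProduct_smul, hdd, ← hqdef, smul_eq_mul, smul_eq_mul, smul_eq_mul]
    rw [show Real.sqrt lam * (Δ / 2) * (Real.sqrt lam * (Δ / 2) * (D - c * q))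
        = (Real.sqrt lam * Real.sqrt lam) * (Δ / 2) ^ 2 * (D - c * q) from by ring, hss]
  have hαα : α ⬝ᵥ α = (Δ / 2) ^ 2 := by
    simp only [hα, dotProduct, ite_mul, zero_mul, mul_ite, mul_zero,
      Finset.sum_ite_eq', Finset.mem_univ, if_true]
    ring
  -- KL value
  have hKL : klGaussian mu1 S1 mu2 S2
      = (1 / 2) * (lam * c * (Fs / 2) + lam * (Δ / 2) ^ 2 * (D - c * q)) := by
    unfold klGaussian
    rw [hTRval, hLOG, hQUAD, hKT]
    ring
  have hF0 : 0 ≤ Fs := Finset.sum_nonneg fun i _ => Finset.sum_nonneg fun j _ => sq_nonneg _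
  -- column geometry
  set t : ℝ := u1 ⬝ᵥ u2 with ht_def
  have htdef : (∑ i, u1 i * u2 i) = t := rfl
  have he' : (∑ i, e i * e i) = 1 := he
  have hu1' : (∑ i, u1 i * u1 i) = 1 := hu1
  have hu2' : (∑ i, u2 i * u2 i) = 1 := hu2
  have heu1' : (∑ i, e i * u1 i) = 0 := heu1
  have heu2' : (∑ i, e i * u2 i) = 0 := heu2
  have hb1 : (∑ i, B1 i 0 * B1 i 0) = 1 := by
    have h := congrFun (congrFun hB1 0) 0
    simpa [Matrix.mul_apply, Matrix.one_apply] using h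
  have hb2 : (∑ i, B2 i 0 * B2 i 0) = 1 := by
    have h := congrFun (congrFun hB2 0) 0
    simpa [Matrix.mul_apply, Matrix.one_apply] using h
  have hs : (∑ i, B1 i 0 * B2 i 0) = (1 - ε ^ 2) + ε ^ 2 * t := by
    have h1 : ∀ i, B1 i 0 * B2 i 0
        = (Real.sqrt (1 - ε ^ 2) * Real.sqrt (1 - ε ^ 2)) * (e i * e i)
          + ((Real.sqrt (1 - ε ^ 2) * ε) * (e i * u2 i))
            + (((ε * Real.sqrt (1 - ε ^ 2)) * (e i * u1 i)) + (ε * ε) * (u1 i * u2 i)) := by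
      intro i
      rw [hcol1, hcol2]
      ring
    simp only [h1, Finset.sum_add_distrib, ← Finset.mul_sum]
    rw [ha2, he', heu1', heu2', htdef]
    ring
  have hPdiff : ∀ i j, (P1 - P2) i j = B1 i 0 * B1 j 0 - B2 i 0 * B2 j 0 := by
    intro i j
    simp only [Matrix.sub_apply, Matrix.mul_apply, Matrix.transpose_apply, hP1def, hP2def]
    rw [← Finset.sum_sub_distrib]
    rw [Finset.sum_eq_single (0 : Fin K)]
    · intro k _ hk
      rw [hcols k hk i, hcols k hk j, sub_self]
    · intro h0
      exact absurd (Finset.mem_univ _) h0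
  have hFs_val : Fs = 2 - 2 * ((1 - ε ^ 2) + ε ^ 2 * t) ^ 2 := by
    have h1 : Fs = ∑ i, ∑ j,
        ((B1 i 0 * B1 i 0) * (B1 j 0 * B1 j 0)
          - (B1 i 0 * B2 i 0) * (2 * (B1 j 0 * B2 j 0))
            - (-((B2 i 0 * B2 i 0) * (B2 j 0 * B2 j 0)))) := by
      rw [hFsdef]
      exact Finset.sum_congr rfl fun i _ => Finset.sum_congr rfl fun j _ => by
        rw [hPdiff]; ring
    rw [h1]
    simp only [Finset.sum_sub_distrib, Finset.sum_neg_distrib, ← Finset.mul_sum,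
      ← Finset.sum_mul]
    rw [hb1, hb2, hs]
    ring
  have hD_val : D = ε ^ 2 * (2 - 2 * t) := by
    have h1 : ∀ i, (B1 i 0 - B2 i 0) ^ 2
        = (ε * ε) * (u1 i * u1 i) - (ε * ε) * (2 * (u1 i * u2 i))
          - (-((ε * ε) * (u2 i * u2 i))) := by
      intro i
      rw [hcol1, hcol2]
      ring
    rw [hDdef]
    simp only [h1, Finset.sum_sub_distrib, Finset.sum_neg_distrib, ← Finset.mul_sum]
    rw [hu1', hu2', htdef]
    ring
  have ht2 : t ^ 2 ≤ 1 := by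
    have h := Finset.sum_mul_sq_le_sq_mul_sq Finset.univ u1 u2
    have e1 : (∑ i, u1 i ^ 2) = 1 := by simp only [sq]; exact hu1'
    have e2 : (∑ i, u2 i ^ 2) = 1 := by simp only [sq]; exact hu2'
    rw [e1, e2, one_mul] at h
    calc t ^ 2 = (∑ i, u1 i * u2 i) ^ 2 := by rw [htdef]
    _ ≤ 1 := h
  have htgt : (2 * lam / (1 + lam) + Δ ^ 2 / 2) * lam * ε ^ 2
      = 2 * lam * c * ε ^ 2 + lam * Δ ^ 2 * ε ^ 2 / 2 := by
    rw [hc]; field_simp; ring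
  have hx : lam ^ 2 / (2 * (1 + lam)) = lam * c / 2 := by rw [hc]; field_simp; ring
  clear_value Fs D q T t
  refine ⟨⟨hdet1, hinv1⟩, ⟨hdet2, hinv2⟩, ⟨hm1, hq1⟩, ⟨hm2, hq2⟩, ?_, ?_⟩
  · rw [hKL, hαα]
    exact bound1_arith lam c Fs D q Δ hlam hc0 hF0 hq0 hx
  · rw [hKL]
    exact bound2_arith lam c Fs D q Δ ε t hlam hc0 hq0 hFs_val hD_val ht2 hε0 hε1 htgt
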